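/- Let ℓ be a positive natural number and let 2^v be the largest power of 2 dividing ℓ. Then the binomial coefficient binom(ℓ + 2^v - 1, 2^v) is odd. -/

import Mathlib

/-- If `ℓ > 0` and `2^v` is the `2`-part of `ℓ` (so `v` is the `2`-adic valuation of `ℓ`),
then `C(ℓ + 2^v - 1, 2^v)` is odd. -/
theorem choose_add_two_part_sub_one_odd (ℓ : ℕ) (hℓ : 0 < ℓ) :
    Odd ((ℓ + 2 ^ (padicValNat 2 ℓ) - 1).choose (2 ^ (padicValNat 2 ℓ))) := by
  haveI : Fact (Nat.Prime 2) := ⟨Nat.prime_two⟩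
  set v := padicValNat 2 ℓ with hv
  set n := ℓ - 1 with hn
  set k := 2 ^ v with hk
  have hkpos : 0 < k := pow_pos (by norm_num) v
  have hnk : ℓ + k - 1 = n + k := by omega
  rw [hnk]
  have hdvd : 2 ^ v ∣ ℓ := pow_padicValNat_dvd
  have hval : padicValNat 2 ((n + k).choose k) = 0 := by
    rw [padicValNat_choose' (b := Nat.log 2 (n + k) + 1) (lt_add_one _)]
    rw [Finset.card_eq_zero, Finset.filter_eq_empty_iff]
    intro i hi
    simp only [not_le]
    have hipos : 0 < 2 ^ i := pow_pos (by norm_num) i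
    rcases le_or_gt i v with h | h
    · have hk0 : k % 2 ^ i = 0 := Nat.mod_eq_zero_of_dvd (pow_dvd_pow 2 h)
      rw [hk0]
      simpa using Nat.mod_lt n hipos
    · -- v < i
      have h2i : ¬ 2 ^ i ∣ ℓ := by
        intro hd
        have := (padicValNat_dvd_iff (p := 2) i ℓ).mp hd
        omega
      set r := ℓ % 2 ^ i with hr
      have hr0 : 0 < r :=
        Nat.pos_of_ne_zero fun h0 => h2i (Nat.dvd_of_mod_eq_zero h0)
      have hrd : 2 ^ v ∣ r := (Nat.dvd_mod_iff (pow_dvd_pow 2 h.le)).mpr hdvd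
      obtain ⟨s, hs⟩ := hrd
      have hrlt : r < 2 ^ i := Nat.mod_lt _ hipos
      have hsum : r + 2 ^ v ≤ 2 ^ i := by
        have hpow : 2 ^ v * 2 ^ (i - v) = 2 ^ i := by
          rw [← pow_add]; congr 1; omega
        have hst : s < 2 ^ (i - v) := by
          have := hrlt; rw [hs, ← hpow] at this
          exact Nat.lt_of_mul_lt_mul_left this
        calc r + 2 ^ v = 2 ^ v * (s + 1) := by rw [hs]; ring
          _ ≤ 2 ^ v * 2 ^ (i - v) := Nat.mul_le_mul_left _ hst
          _ = 2 ^ i := hpow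
      have hkmod : k % 2 ^ i = 2 ^ v := Nat.mod_eq_of_lt (by
        calc (2:ℕ) ^ v < 2 ^ v + r := by omega
          _ ≤ 2 ^ i := by omega)
      have hnmod : n % 2 ^ i = r - 1 := by
        have hq := Nat.div_add_mod ℓ (2 ^ i)
        have hneq : n = 2 ^ i * (ℓ / 2 ^ i) + (r - 1) := by omega
        rw [hneq, Nat.mul_add_mod]
        exact Nat.mod_eq_of_lt (by omega)
      rw [hkmod, hnmod]
      omega
  have hne : (n + k).choose k ≠ 0 := (Nat.choose_pos (Nat.le_add_left _ _)).ne'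
  rcases (padicValNat.eq_zero_iff).mp hval with h | h | h
  · norm_num at h
  · exact absurd h hne
  · exact Nat.odd_iff.mpr (Nat.two_dvd_ne_zero.mp h)
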